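/- Let f : [a,b] × E → E be continuous, u₀ ∈ E, and let u : [a,b] → E be continuous and satisfy the Volterra integral equation u(t) = u₀ + (1/Γ(α)) ∫_a^t (t-s)^{α-1} f(s, u(s)) ds for every t ∈ [a,b]. Then u(a) = u₀, and for every t ∈ [a,b] the Caputo fractional derivative (ᶜD^α_a u)(t) exists, equals f(t, u(t)), and the map t ↦ (ᶜD^α_a u)(t) is continuous on [a,b]. -/

import Mathlib

open MeasureTheory Set intervalIntegral
lemma real_betaIntegral {p q : ℝ} (hp : 0 < p) (hq : 0 < q) :
    ∫ x in (0:ℝ)..1, x ^ (p - 1) * (1 - x) ^ (q - 1) =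
      Real.Gamma p * Real.Gamma q / Real.Gamma (p + q) := by
  have h := Complex.Gamma_mul_Gamma_eq_betaIntegral (s := p) (t := q)
    (by simpa using hp) (by simpa using hq)
  have hB : Complex.betaIntegral p q =
      ((∫ x in (0:ℝ)..1, x ^ (p - 1) * (1 - x) ^ (q - 1) : ℝ) : ℂ) := by
    rw [Complex.betaIntegral, ← intervalIntegral.integral_ofReal]
    refine intervalIntegral.integral_congr fun x hx => ?_
    rw [Set.uIcc_of_le (by norm_num : (0:ℝ) ≤ 1)] at hx
    rw [Complex.ofReal_mul, Complex.ofReal_cpow hx.1, Complex.ofReal_cpow (by linarith [hx.2])]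
    push_cast
    ring
  rw [hB, ← Complex.ofReal_add, Complex.Gamma_ofReal, Complex.Gamma_ofReal,
    Complex.Gamma_ofReal, ← Complex.ofReal_mul, ← Complex.ofReal_mul] at h
  have h2 := Complex.ofReal_injective h
  have hΓ : Real.Gamma (p + q) ≠ 0 := (Real.Gamma_pos_of_pos (by linarith)).ne'
  field_simp
  linarith [h2]

lemma kernel_integral {α : ℝ} (hα0 : 0 < α) (hα1 : α < 1) {r τ : ℝ} (h : r < τ) :
    ∫ s in r..τ, (τ - s) ^ (-α) * (s - r) ^ (α - 1) =
      Real.Gamma α * Real.Gamma (1 - α) := by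
  set c := τ - r with hc
  have hc0 : 0 < c := by simp [hc]; linarith
  have hsub := intervalIntegral.integral_comp_mul_add
    (a := (0:ℝ)) (b := 1) (fun s => (τ - s) ^ (-α) * (s - r) ^ (α - 1)) hc0.ne' r
  have heq : ∫ x in (0:ℝ)..1, (τ - (c * x + r)) ^ (-α) * ((c * x + r) - r) ^ (α - 1)
      = c⁻¹ * ∫ x in (0:ℝ)..1, x ^ (α - 1) * (1 - x) ^ (-α) := by
    rw [← intervalIntegral.integral_const_mul]
    refine intervalIntegral.integral_congr fun x hx => ?_
    rw [Set.uIcc_of_le (by norm_num : (0:ℝ) ≤ 1)] at hx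
    have h1 : τ - (c * x + r) = c * (1 - x) := by rw [hc]; ring
    have h2 : (c * x + r) - r = c * x := by ring
    rw [h1, h2, Real.mul_rpow hc0.le (by linarith [hx.2]), Real.mul_rpow hc0.le hx.1]
    have : c ^ (-α) * c ^ (α - 1) = c⁻¹ := by
      rw [← Real.rpow_add hc0]
      rw [show -α + (α - 1) = -1 by ring, Real.rpow_neg_one]
    calc c ^ (-α) * (1 - x) ^ (-α) * (c ^ (α - 1) * x ^ (α - 1))
        = (c ^ (-α) * c ^ (α - 1)) * ((1 - x) ^ (-α) * x ^ (α - 1)) := by ring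
      _ = c⁻¹ * (x ^ (α - 1) * (1 - x) ^ (-α)) := by rw [this]; ring
  have hbeta : ∫ x in (0:ℝ)..1, x ^ (α - 1) * (1 - x) ^ (-α)
      = Real.Gamma α * Real.Gamma (1 - α) := by
    have := real_betaIntegral hα0 (by linarith : (0:ℝ) < 1 - α)
    simp only [show (1 : ℝ) - α - 1 = -α by ring, show α + (1 - α) = 1 by ring,
      Real.Gamma_one, div_one] at this
    exact this
  rw [heq, hbeta] at hsub
  have : (c * 0 + r) = r := by ring
  rw [this, show c * 1 + r = τ by rw [hc]; ring, smul_eq_mul] at hsub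
  field_simp at hsub ⊢
  linarith [hsub]

lemma rpow_sub_integrable {β c : ℝ} (hβ : -1 < β) (a b : ℝ) :
    IntervalIntegrable (fun s => (c - s) ^ β) MeasureTheory.volume a b := by
  simpa using (intervalIntegrable_rpow' (a := c - a) (b := c - b) hβ).comp_sub_left c

lemma sub_rpow_integrable {β c : ℝ} (hβ : -1 < β) (a b : ℝ) :
    IntervalIntegrable (fun s => (s - c) ^ β) MeasureTheory.volume a b := by
  simpa using (intervalIntegrable_rpow' (a := a - c) (b := b - c) hβ).comp_sub_right c

lemma kernel_integrable {α τ r : ℝ} (hα0 : 0 < α) (hα1 : α < 1) (h : r < τ) :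
    IntervalIntegrable (fun s => (τ - s) ^ (-α) * (s - r) ^ (α - 1))
      MeasureTheory.volume r τ := by
  set m := (r + τ) / 2 with hm
  have hrm : r < m := by rw [hm]; linarith
  have hmτ : m < τ := by rw [hm]; linarith
  have h1 : IntervalIntegrable (fun s => (τ - s) ^ (-α) * (s - r) ^ (α - 1))
      MeasureTheory.volume r m := by
    refine IntervalIntegrable.continuousOn_mul (sub_rpow_integrable (by linarith) r m) ?_
    refine ContinuousOn.rpow_const ((continuous_const.sub continuous_id).continuousOn) ?_
    intro s hs
    rw [Set.uIcc_of_le hrm.le] at hs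
    exact Or.inl (by simp; linarith [hs.2])
  have h2 : IntervalIntegrable (fun s => (τ - s) ^ (-α) * (s - r) ^ (α - 1))
      MeasureTheory.volume m τ := by
    refine IntervalIntegrable.mul_continuousOn (rpow_sub_integrable (by linarith) m τ) ?_
    refine ContinuousOn.rpow_const ((continuous_id.sub continuous_const).continuousOn) ?_
    intro s hs
    rw [Set.uIcc_of_le hmτ.le] at hs
    exact Or.inl (by simp; linarith [hs.1])
  exact h1.trans h2

lemma integral_rpow_sub {α : ℝ} (hα0 : 0 < α) {a s : ℝ} :
    ∫ r in a..s, (s - r) ^ (α - 1) = (s - a) ^ α / α := by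
  rw [intervalIntegral.integral_comp_sub_left (fun x => x ^ (α - 1)) s, sub_self,
    integral_rpow (Or.inl (by linarith : (-1:ℝ) < α - 1)),
    Real.zero_rpow (by linarith : α - 1 + 1 ≠ 0)]
  rw [show α - 1 + 1 = α by ring]
  ring

lemma fubini_step {E : Type*} [NormedAddCommGroup E] [NormedSpace ℝ E] [CompleteSpace E]
    {α : ℝ} (hα0 : 0 < α) (hα1 : α < 1) {a τ : ℝ} (haτ : a < τ)
    {g : ℝ → E} (hg : ContinuousOn g (Set.Icc a τ)) :
    ∫ s in a..τ, ∫ r in a..s, (((τ - s) ^ (-α) * (s - r) ^ (α - 1)) : ℝ) • g r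
      = (Real.Gamma α * Real.Gamma (1 - α)) • ∫ r in a..τ, g r := by
  obtain ⟨M, hM⟩ := isCompact_Icc.exists_bound_of_continuousOn hg
  set M' := max M 0 with hM'def
  have hM'0 : (0:ℝ) ≤ M' := le_max_right _ _
  have hM' : ∀ r ∈ Set.Icc a τ, ‖g r‖ ≤ M' := fun r hr => (hM r hr).trans (le_max_left _ _)
  set K : ℝ → ℝ → ℝ := fun s r => (τ - s) ^ (-α) * (s - r) ^ (α - 1) with hK
  set T : Set (ℝ × ℝ) := {p | p.2 < p.1} with hT
  set Ft : ℝ × ℝ → E := T.indicator (fun p => (K p.1 p.2) • g p.2) with hFt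
  set μ : Measure ℝ := volume.restrict (Set.Ioc a τ) with hμ
  have hTmeas : MeasurableSet T := measurableSet_lt measurable_snd measurable_fst
  have hgm : ∀ {c d : ℝ}, a ≤ c → d ≤ τ → AEStronglyMeasurable g (volume.restrict (Set.Ioc c d)) :=
    fun {c d} hc hd => (hg.mono (fun x hx => ⟨hc.trans hx.1.le, hx.2.trans hd⟩)).aestronglyMeasurable
      measurableSet_Ioc
  have hKm : Measurable (fun p : ℝ × ℝ => K p.1 p.2) :=
    ((measurable_const.sub measurable_fst).pow_const _).mul
      ((measurable_fst.sub measurable_snd).pow_const _)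
  have hFtm : AEStronglyMeasurable Ft (μ.prod μ) := by
    refine AEStronglyMeasurable.indicator ?_ hTmeas
    exact hKm.aestronglyMeasurable.smul ((hgm le_rfl le_rfl).comp_snd)
  -- pointwise description of Ft
  have hFt_on : ∀ s r, r < s → Ft (s, r) = K s r • g r := fun s r h =>
    Set.indicator_of_mem (show (s, r) ∈ T from h) _
  have hFt_diag : ∀ s r, r ∈ Set.Ioc a s → Ft (s, r) = K s r • g r := by
    intro s r hr
    rcases lt_or_eq_of_le hr.2 with h | h
    · exact hFt_on s r h
    · rw [hFt, Set.indicator_of_notMem (show (s, r) ∉ T by simp [hT, h]), hK]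
      simp only [h, sub_self, Real.zero_rpow (by linarith : α - 1 ≠ 0), mul_zero, zero_smul]
  have hFt_off : ∀ s r, s ≤ r → Ft (s, r) = 0 := fun s r h =>
    Set.indicator_of_notMem (by simp [hT]; exact h) _
  -- integrability of vertical sections
  have hsec : ∀ s, a ≤ s → s ≤ τ →
      IntegrableOn (fun r => (K s r) • g r) (Set.Ioc a s) volume := by
    intro s has hsτ
    have h1 : IntegrableOn (fun r => (s - r) ^ (α - 1) • g r) (Set.Ioc a s) volume := by
      refine Integrable.mono' (g := fun r => M' * (s - r) ^ (α - 1))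
        (((rpow_sub_integrable (by linarith) a s).1).const_mul M')
        ((((measurable_id.const_sub s).pow_const _).aestronglyMeasurable).smul (hgm le_rfl hsτ))
        ?_
      filter_upwards [ae_restrict_mem measurableSet_Ioc] with r hr
      rw [norm_smul, Real.norm_eq_abs,
        abs_of_nonneg (Real.rpow_nonneg (by linarith [hr.2]) _), mul_comm M']
      exact mul_le_mul_of_nonneg_left (hM' r ⟨hr.1.le, hr.2.trans hsτ⟩)
        (Real.rpow_nonneg (by linarith [hr.2]) _)
    have h2 := h1.smul ((τ - s) ^ (-α))
    refine MeasureTheory.IntegrableOn.congr_fun h2 (fun r hr => ?_) measurableSet_Ioc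
    rw [hK]; simp [smul_smul]
  -- integrability of Ft rows
  have hrow : ∀ s, a ≤ s → s ≤ τ → IntegrableOn (fun r => Ft (s, r)) (Set.Ioc a τ) volume := by
    intro s has hsτ
    rw [← Set.Ioc_union_Ioc_eq_Ioc has hsτ]
    refine IntegrableOn.union ?_ ?_
    · exact ((hsec s has hsτ).congr_fun (fun r hr => (hFt_diag s r hr).symm) measurableSet_Ioc)
    · exact (integrableOn_zero).congr_fun (fun r hr => (hFt_off s r hr.1.le).symm) measurableSet_Ioc
  -- value of the row integrals
  have hrowval : ∀ s, a ≤ s → s ≤ τ →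
      (∫ r in Set.Ioc a τ, Ft (s, r)) = ∫ r in a..s, K s r • g r := by
    intro s has hsτ
    rw [← Set.Ioc_union_Ioc_eq_Ioc has hsτ,
      setIntegral_union (Set.Ioc_disjoint_Ioc_of_le le_rfl) measurableSet_Ioc
        ((hsec s has hsτ).congr_fun (fun r hr => (hFt_diag s r hr).symm) measurableSet_Ioc)
        ((integrableOn_zero).congr_fun (fun r hr => (hFt_off s r hr.1.le).symm) measurableSet_Ioc),
      setIntegral_congr_fun measurableSet_Ioc (fun r hr => hFt_diag s r hr),
      setIntegral_congr_fun (f := fun r => Ft (s, r)) (g := fun _ => (0:E)) measurableSet_Ioc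
        (fun r (hr : r ∈ Set.Ioc s τ) => hFt_off s r hr.1.le),
      MeasureTheory.integral_zero, add_zero, intervalIntegral.integral_of_le has]
  -- product integrability
  have hInt : Integrable Ft (μ.prod μ) := by
    rw [integrable_prod_iff hFtm]
    constructor
    · rw [hμ]
      filter_upwards [ae_restrict_mem measurableSet_Ioc] with s hs
      exact hrow s hs.1.le hs.2
    · refine Integrable.mono' (g := fun s => (τ - s) ^ (-α) * M' * ((τ - a) ^ α / α))
        ?_ (hFtm.norm.integral_prod_right') ?_
      · rw [hμ]
        exact (((rpow_sub_integrable (by linarith) a τ).1.mul_const _).mul_const _)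
      · rw [hμ]
        filter_upwards [ae_restrict_mem measurableSet_Ioc] with s hs
        rw [Real.norm_of_nonneg (integral_nonneg fun r => norm_nonneg _)]
        have hτs : (0:ℝ) ≤ (τ - s) ^ (-α) := Real.rpow_nonneg (by linarith [hs.2]) _
        have hnormrow : IntegrableOn (fun r => ‖Ft (s, r)‖) (Set.Ioc a τ) volume :=
          (hrow s hs.1.le hs.2).norm
        calc ∫ r in Set.Ioc a τ, ‖Ft (s, r)‖
            = (∫ r in Set.Ioc a s, ‖Ft (s, r)‖) + ∫ r in Set.Ioc s τ, ‖Ft (s, r)‖ := by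
              rw [← setIntegral_union (Set.Ioc_disjoint_Ioc_of_le le_rfl) measurableSet_Ioc
                (hnormrow.mono_set (Set.Ioc_subset_Ioc_right hs.2))
                (hnormrow.mono_set (Set.Ioc_subset_Ioc_left hs.1.le)),
                Set.Ioc_union_Ioc_eq_Ioc hs.1.le hs.2]
          _ = ∫ r in Set.Ioc a s, ‖Ft (s, r)‖ := by
              rw [setIntegral_congr_fun (f := fun r => ‖Ft (s, r)‖) (g := fun _ => (0:ℝ))
                measurableSet_Ioc (fun r (hr : r ∈ Set.Ioc s τ) => by
                  simp only []; rw [hFt_off s r hr.1.le, norm_zero]), MeasureTheory.integral_zero, add_zero]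
          _ ≤ ∫ r in Set.Ioc a s, ((τ - s) ^ (-α) * M') * (s - r) ^ (α - 1) := by
              refine setIntegral_mono_on
                (hnormrow.mono_set (Set.Ioc_subset_Ioc_right hs.2))
                ((((rpow_sub_integrable (by linarith) a s).1).const_mul _))
                measurableSet_Ioc (fun r hr => ?_)
              rw [hFt_diag s r hr, norm_smul, Real.norm_eq_abs, hK]
              have h1 : (0:ℝ) ≤ (s - r) ^ (α - 1) := Real.rpow_nonneg (by linarith [hr.2]) _
              rw [abs_of_nonneg (mul_nonneg hτs h1)]
              calc (τ - s) ^ (-α) * (s - r) ^ (α - 1) * ‖g r‖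
                  ≤ (τ - s) ^ (-α) * (s - r) ^ (α - 1) * M' := by
                    exact mul_le_mul_of_nonneg_left
                      (hM' r ⟨hr.1.le, hr.2.trans hs.2⟩) (mul_nonneg hτs h1)
                _ = (τ - s) ^ (-α) * M' * (s - r) ^ (α - 1) := by ring
          _ = (τ - s) ^ (-α) * M' * ((s - a) ^ α / α) := by
              rw [MeasureTheory.integral_const_mul, ← intervalIntegral.integral_of_le hs.1.le,
                integral_rpow_sub hα0]
          _ ≤ (τ - s) ^ (-α) * M' * ((τ - a) ^ α / α) := by
              have h1 : (s - a) ^ α ≤ (τ - a) ^ α :=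
                Real.rpow_le_rpow (by linarith [hs.1]) (by linarith [hs.2]) hα0.le
              have h2 : (0:ℝ) ≤ (τ - s) ^ (-α) * M' := mul_nonneg hτs hM'0
              exact mul_le_mul_of_nonneg_left (by gcongr) h2
  -- column integral values
  have hcol : ∀ r ∈ Set.Ioo a τ,
      (∫ s in Set.Ioc a τ, Ft (s, r)) = (Real.Gamma α * Real.Gamma (1 - α)) • g r := by
    intro r hr
    have hint2 : IntegrableOn (fun s => Ft (s, r)) (Set.Ioc r τ) volume := by
      refine MeasureTheory.IntegrableOn.congr_fun
        (((kernel_integrable hα0 hα1 hr.2).1).smul_const (g r))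
        (fun s hs => (hFt_on s r hs.1).symm) measurableSet_Ioc
    rw [← Set.Ioc_union_Ioc_eq_Ioc hr.1.le hr.2.le,
      setIntegral_union (Set.Ioc_disjoint_Ioc_of_le le_rfl) measurableSet_Ioc
        ((integrableOn_zero).congr_fun
          (fun s (hs : s ∈ Set.Ioc a r) => (hFt_off s r hs.2).symm) measurableSet_Ioc)
        hint2,
      setIntegral_congr_fun (g := fun _ => (0:E)) measurableSet_Ioc
        (fun s (hs : s ∈ Set.Ioc a r) => hFt_off s r hs.2),
      MeasureTheory.integral_zero, zero_add,
      setIntegral_congr_fun measurableSet_Ioc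
        (fun s (hs : s ∈ Set.Ioc r τ) => hFt_on s r hs.1),
      _root_.integral_smul_const, ← intervalIntegral.integral_of_le hr.2.le]
    rw [show (fun s => K s r) = fun s => (τ - s) ^ (-α) * (s - r) ^ (α - 1) from rfl]
    rw [kernel_integral hα0 hα1 hr.2]
  calc ∫ s in a..τ, ∫ r in a..s, (((τ - s) ^ (-α) * (s - r) ^ (α - 1)) : ℝ) • g r
      = ∫ s in Set.Ioc a τ, ∫ r in Set.Ioc a τ, Ft (s, r) := by
        rw [intervalIntegral.integral_of_le haτ.le]
        exact setIntegral_congr_fun measurableSet_Ioc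
          (fun s hs => (hrowval s hs.1.le hs.2).symm)
    _ = ∫ r in Set.Ioc a τ, ∫ s in Set.Ioc a τ, Ft (s, r) :=
        MeasureTheory.integral_integral_swap hInt
    _ = (Real.Gamma α * Real.Gamma (1 - α)) • ∫ r in a..τ, g r := by
        rw [integral_Ioc_eq_integral_Ioo,
          setIntegral_congr_fun measurableSet_Ioo (fun r hr => hcol r hr),
          MeasureTheory.integral_smul, ← integral_Ioc_eq_integral_Ioo,
          ← intervalIntegral.integral_of_le haτ.le]

/-- If `f : [a,b] × E → E` is continuous and `u : [a,b] → E` is continuous and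
satisfies the Volterra equation `u(t) = u₀ + (1/Γ(α)) ∫_a^t (t-s)^{α-1} f(s,u(s)) ds` on `[a,b]`,
then `u(a) = u₀`, for every `t ∈ [a,b]` the Caputo derivative `(ᶜDᵅₐ u)(t)` (the strong derivative
at `t` of `τ ↦ (1/Γ(1-α)) ∫_a^τ (τ-s)^{-α} (u(s) - u(a)) ds`) exists and equals `f(t, u(t))`,
and `t ↦ (ᶜDᵅₐ u)(t) = f(t, u(t))` is continuous on `[a,b]`. -/
theorem volterra_implies_caputo_ivp
    {E : Type*} [NormedAddCommGroup E] [NormedSpace ℝ E] [CompleteSpace E]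
    (a b α : ℝ) (hab : a < b) (hα0 : 0 < α) (hα1 : α < 1)
    (f : ℝ → E → E)
    (hf : ContinuousOn (fun p : ℝ × E => f p.1 p.2) (Set.Icc a b ×ˢ Set.univ))
    (u₀ : E) (u : ℝ → E)
    (hu : ContinuousOn u (Set.Icc a b))
    (hVol : ∀ t ∈ Set.Icc a b,
      u t = u₀ + (Real.Gamma α)⁻¹ • ∫ s in a..t, ((t - s) ^ (α - 1) : ℝ) • f s (u s)) :
    u a = u₀ ∧
    (∀ t ∈ Set.Icc a b,
      HasDerivWithinAt
        (fun τ => (Real.Gamma (1 - α))⁻¹ • ∫ s in a..τ, ((τ - s) ^ (-α) : ℝ) • (u s - u a))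
        (f t (u t)) (Set.Icc a b) t) ∧
    ContinuousOn (fun t => f t (u t)) (Set.Icc a b) := by
  have hg : ContinuousOn (fun s => f s (u s)) (Set.Icc a b) :=
    hf.comp (continuousOn_id.prodMk hu) (fun x hx => ⟨hx, trivial⟩)
  set g : ℝ → E := fun s => f s (u s) with hgdef
  have hua : u a = u₀ := by
    have h := hVol a ⟨le_refl a, hab.le⟩
    simpa using h
  have hΓα : Real.Gamma α ≠ 0 := (Real.Gamma_pos_of_pos hα0).ne'
  have hΓ1α : Real.Gamma (1 - α) ≠ 0 := (Real.Gamma_pos_of_pos (by linarith)).ne'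
  have key : ∀ τ ∈ Set.Icc a b,
      (Real.Gamma (1 - α))⁻¹ • (∫ s in a..τ, ((τ - s) ^ (-α) : ℝ) • (u s - u a))
        = ∫ s in a..τ, g s := by
    intro τ hτ
    rcases eq_or_lt_of_le hτ.1 with h | h
    · rw [← h]
      simp
    · have hτb := hτ.2
      have hgτ : ContinuousOn g (Set.Icc a τ) := hg.mono (Set.Icc_subset_Icc_right hτb)
      have hstep1 : ∫ s in a..τ, ((τ - s) ^ (-α) : ℝ) • (u s - u a)
          = ∫ s in a..τ, (Real.Gamma α)⁻¹ •
              (((τ - s) ^ (-α) : ℝ) • ∫ r in a..s, ((s - r) ^ (α - 1) : ℝ) • g r) := by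
        refine intervalIntegral.integral_congr (fun s hs => ?_)
        rw [Set.uIcc_of_le hτ.1] at hs
        have hsab : s ∈ Set.Icc a b := ⟨hs.1, hs.2.trans hτb⟩
        rw [hua, hVol s hsab, add_sub_cancel_left, smul_comm]
      rw [hstep1, intervalIntegral.integral_smul]
      have hstep2 : ∫ s in a..τ, (((τ - s) ^ (-α) : ℝ) • ∫ r in a..s, ((s - r) ^ (α - 1) : ℝ) • g r)
          = ∫ s in a..τ, ∫ r in a..s, (((τ - s) ^ (-α) * (s - r) ^ (α - 1)) : ℝ) • g r := by
        refine intervalIntegral.integral_congr (fun s hs => ?_)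
        rw [← intervalIntegral.integral_smul]
        exact intervalIntegral.integral_congr (fun r hr => smul_smul _ _ _)
      rw [hstep2, fubini_step hα0 hα1 h hgτ, smul_smul, smul_smul]
      rw [show (Real.Gamma (1 - α))⁻¹ * (Real.Gamma α)⁻¹ * (Real.Gamma α * Real.Gamma (1 - α)) = 1
        by field_simp, one_smul]
  refine ⟨hua, fun t ht => ?_, hg⟩
  haveI : Fact (t ∈ Set.Icc a b) := ⟨ht⟩
  have hFTC : HasDerivWithinAt (fun τ => ∫ s in a..τ, g s) (g t) (Set.Icc a b) t := by
    refine intervalIntegral.integral_hasDerivWithinAt_right ?_ ?_ ?_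
    · exact (hg.mono (by rw [Set.uIcc_of_le ht.1]; exact Set.Icc_subset_Icc_right ht.2)).intervalIntegrable
    · exact ⟨Set.Icc a b, self_mem_nhdsWithin, hg.aestronglyMeasurable measurableSet_Icc⟩
    · exact hg t ht
  exact hFTC.congr (fun τ hτ => key τ hτ) (key t ht)
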